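/- Let k ≥ 3 and let f : K^3 → K with ess(f) = 3 and gap(f) = 2. Then ess(f_{i←j}) = 1 for all i, j ∈ {1,2,3} with i ≠ j. -/

import Mathlib

open scoped Classical

/-- The identification minor `f_{i←j}`: the `i`-th argument is replaced by the `j`-th. -/
def minor {n k : ℕ} (f : (Fin n → Fin k) → Fin k) (i j : Fin n) :
    (Fin n → Fin k) → Fin k :=
  fun a => f (Function.update a i (a j))

/-- The variable `x_i` is essential in `f`. -/
def Essential {n k : ℕ} (f : (Fin n → Fin k) → Fin k) (i : Fin n) : Prop :=
  ∃ a : Fin n → Fin k, ∃ b : Fin k, f (Function.update a i b) ≠ f a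

/-- The number of essential variables of `f`. -/
noncomputable def essCount {n k : ℕ} (f : (Fin n → Fin k) → Fin k) : ℕ :=
  (Finset.univ.filter (fun i => Essential f i)).card

/-- The essential arity gap of `f`. -/
noncomputable def gap {n k : ℕ} (f : (Fin n → Fin k) → Fin k) : ℕ :=
  essCount f -
    Finset.sup
      (Finset.univ.filter
        (fun p : Fin n × Fin n =>
          p.1 ≠ p.2 ∧ Essential f p.1 ∧ Essential f p.2))
      (fun p => essCount (minor f p.1 p.2))

lemma not_ess_forall {n k : ℕ} {g : (Fin n → Fin k) → Fin k} {i : Fin n}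
    (h : ¬ Essential g i) : ∀ a b, g (Function.update a i b) = g a := by
  simp only [Essential, not_exists, ne_eq, not_not] at h
  exact h

lemma two_le_essCount {n k : ℕ} {g : (Fin n → Fin k) → Fin k} {p q : Fin n}
    (hpq : p ≠ q) (hp : Essential g p) (hq : Essential g q) : 2 ≤ essCount g := by
  have hsub : ({p, q} : Finset (Fin n)) ⊆ Finset.univ.filter (fun i => Essential g i) := by
    intro x hx
    rcases Finset.mem_insert.mp hx with h | h
    · subst h; exact Finset.mem_filter.mpr ⟨Finset.mem_univ _, hp⟩
    · rw [Finset.mem_singleton] at h; subst h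
      exact Finset.mem_filter.mpr ⟨Finset.mem_univ _, hq⟩
  calc 2 = ({p, q} : Finset (Fin n)).card := (Finset.card_pair hpq).symm
    _ ≤ _ := Finset.card_le_card hsub
  
lemma essCount_zero_of_const {n k : ℕ} {g : (Fin n → Fin k) → Fin k} {c : Fin k}
    (h : ∀ a, g a = c) : essCount g = 0 := by
  unfold essCount
  rw [Finset.card_eq_zero, Finset.filter_eq_empty_iff]
  intro i _
  rintro ⟨a, b, hab⟩
  exact hab (by rw [h, h])

lemma const_of_essCount_zero {k : ℕ} {g : (Fin 3 → Fin k) → Fin k}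
    (h : essCount g = 0) : ∀ a b, g a = g b := by
  have h' : ∀ i : Fin 3, ¬ Essential g i := by
    intro i hi
    have : i ∈ Finset.univ.filter (fun i => Essential g i) :=
      Finset.mem_filter.mpr ⟨Finset.mem_univ _, hi⟩
    rw [Finset.card_eq_zero.mp h] at this
    exact absurd this (Finset.notMem_empty i)
  have he : ∀ i a b, g (Function.update a i b) = g a := fun i => not_ess_forall (h' i)
  intro a b
  have e1 := he 0 a (b 0)
  have e2 := he 1 (Function.update a 0 (b 0)) (b 1)
  have e3 := he 2 (Function.update (Function.update a 0 (b 0)) 1 (b 1)) (b 2)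
  have hb : Function.update (Function.update (Function.update a 0 (b 0)) 1 (b 1)) 2 (b 2) = b := by
    funext x
    fin_cases x <;> simp
  rw [← e1, ← e2, ← e3, hb]

lemma minors_const {k : ℕ} (f : (Fin 3 → Fin k) → Fin k) (c : Fin k)
    (hc : ∀ v : Fin k, f (fun _ => v) = c)
    (hle : ∀ p q : Fin 3, p ≠ q → essCount (minor f p q) ≤ 1) :
    ∀ p q : Fin 3, p ≠ q → ∀ a, minor f p q a = c := by
  have exr : ∀ p q : Fin 3, ∃ r : Fin 3, r ≠ p ∧ r ≠ q := by decide
  have hall : ∀ p q r : Fin 3, p ≠ q → r ≠ p → r ≠ q →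
      ∀ x : Fin 3, x = p ∨ x = q ∨ x = r := by decide
  intro p q hpq a
  obtain ⟨r, hrp, hrq⟩ := exr p q
  have hnp : ¬ Essential (minor f p q) p := by
    simp only [Essential, not_exists, ne_eq, not_not]
    intro b v
    show f _ = f _
    rw [Function.update_idem, Function.update_of_ne (Ne.symm hpq)]
  have h2 : ¬ Essential (minor f p q) q ∨ ¬ Essential (minor f p q) r := by
    by_contra hcon
    push_neg at hcon
    have h2le := two_le_essCount hrq.symm hcon.1 hcon.2
    have := hle p q hpq
    omega
  rcases h2 with h | h
  · have e := not_ess_forall h a (a r)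
    rw [← e]
    show f _ = c
    have ht : Function.update (Function.update a q (a r)) p
        ((Function.update a q (a r)) q) = fun _ => a r := by
      funext x
      rcases hall p q r hpq hrp hrq x with h1 | h1 | h1 <;> subst h1 <;>
        simp [Function.update_of_ne, Function.update_self, hpq, Ne.symm hpq, hrp, hrq]
    rw [ht]
    exact hc (a r)
  · have e := not_ess_forall h a (a q)
    rw [← e]
    show f _ = c
    have ht : Function.update (Function.update a r (a q)) p
        ((Function.update a r (a q)) q) = fun _ => a q := by
      funext x
      rcases hall p q r hpq hrp hrq x with h1 | h1 | h1 <;> subst h1 <;>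
        simp [Function.update_of_ne, Function.update_self, hpq, Ne.symm hpq, hrp, hrq,
          Ne.symm hrp, Ne.symm hrq]
    rw [ht]
    exact hc (a q)

theorem ess_minor_eq_one {k : ℕ} (hk : 3 ≤ k)
    (f : (Fin 3 → Fin k) → Fin k)
    (hess : essCount f = 3) (hgap : gap f = 2) :
    ∀ i j : Fin 3, i ≠ j → essCount (minor f i j) = 1 := by
  intro i j hij
  have hessall : ∀ x : Fin 3, Essential f x := by
    have hcard : (Finset.univ.filter (fun i => Essential f i)).card = Fintype.card (Fin 3) := by
      simpa [essCount] using hess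
    have huniv := Finset.eq_univ_of_card _ hcard
    intro x
    have hx : x ∈ Finset.univ.filter (fun i => Essential f i) := by
      rw [huniv]; exact Finset.mem_univ x
    exact (Finset.mem_filter.mp hx).2
  have hmem : ∀ p q : Fin 3, p ≠ q →
      (p, q) ∈ Finset.univ.filter
        (fun p : Fin 3 × Fin 3 => p.1 ≠ p.2 ∧ Essential f p.1 ∧ Essential f p.2) :=
    fun p q h => Finset.mem_filter.mpr ⟨Finset.mem_univ _, h, hessall p, hessall q⟩
  have hsup : (Finset.univ.filter
        (fun p : Fin 3 × Fin 3 => p.1 ≠ p.2 ∧ Essential f p.1 ∧ Essential f p.2)).sup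
        (fun p => essCount (minor f p.1 p.2)) = 1 := by
    have h := hgap
    unfold gap at h
    rw [hess] at h
    omega
  have hle : ∀ p q : Fin 3, p ≠ q → essCount (minor f p q) ≤ 1 := by
    intro p q h
    calc essCount (minor f p q) ≤ _ := Finset.le_sup (f := fun p => essCount (minor f p.1 p.2))
          (hmem p q h)
      _ = 1 := hsup
  have hlow : essCount (minor f i j) ≠ 0 := by
    intro h0
    have hconst := const_of_essCount_zero h0
    set c := minor f i j (fun _ => (⟨0, by omega⟩ : Fin k)) with hcdef
    have hc : ∀ v : Fin k, f (fun _ => v) = c := by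
      intro v
      have h1 : f (fun _ => v) = minor f i j (fun _ => v) := by
        show f _ = f _
        congr 1
        funext x
        simp [Function.update_apply]
      rw [h1, hcdef]
      exact hconst _ _
    have hsup0 : (Finset.univ.filter
        (fun p : Fin 3 × Fin 3 => p.1 ≠ p.2 ∧ Essential f p.1 ∧ Essential f p.2)).sup
        (fun p => essCount (minor f p.1 p.2)) = 0 := by
      refine le_antisymm (Finset.sup_le ?_) (Nat.zero_le _)
      intro p hp
      obtain ⟨-, hne, -, -⟩ := Finset.mem_filter.mp hp
      exact (essCount_zero_of_const (minors_const f c hc hle p.1 p.2 hne)).le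
    omega
  exact le_antisymm (hle i j hij) (Nat.one_le_iff_ne_zero.mpr hlow)
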